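/- Consider a single machine with release dates, and let σ and π be two permutations of the same finite jobset, both scheduled starting at time t₀. Let Ω be a finite set of jobs disjoint from that jobset, and let E_min(π) = max(C(t₀, π), min_{i∈Ω} r(i)). If C(t₀, σ) ≤ max(C(t₀, π), E_min(π)) and cost(t₀, σ) ≤ cost(t₀, π), then for every permutation ρ of Ω, cost(t₀, σ ++ ρ) ≤ cost(t₀, π ++ ρ). -/

import Mathlib

/-- State `(completion time, total cost)` of a job sequence on a single
machine with release dates `r` and processing times `p`, started at time `t₀`:
the completion time satisfies `C(t₀, []) = t₀` and
`C(t₀, π ++ [i]) = max(C(t₀, π), r i) + p i`, and the cost is the sum of the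
completion times of the jobs of the sequence. -/
def relState (r p : ℕ → ℕ) (t0 : ℕ) (π : List ℕ) : ℕ × ℕ :=
  π.foldl (fun s i =>
    let c := max s.1 (r i) + p i
    (c, s.2 + c)) (t0, 0)

/-- Completion time of the sequence `π` started at time `t₀`. -/
def relC (r p : ℕ → ℕ) (t0 : ℕ) (π : List ℕ) : ℕ := (relState r p t0 π).1

/-- Sum of the completion times of the jobs of `π`, started at time `t₀`. -/
def relCost (r p : ℕ → ℕ) (t0 : ℕ) (π : List ℕ) : ℕ := (relState r p t0 π).2

/-- `π` is a permutation of the finite jobset `S`: it lists each element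
of `S` exactly once. -/
def IsPermOf (π : List ℕ) (S : Finset ℕ) : Prop :=
  π.Nodup ∧ ∀ x, x ∈ π ↔ x ∈ S

private lemma relShift (r p : ℕ → ℕ) (ρ : List ℕ) : ∀ t s : ℕ,
    ρ.foldl (fun s i =>
      let c := max s.1 (r i) + p i
      (c, s.2 + c)) (t, s) = (relC r p t ρ, s + relCost r p t ρ) := by
  induction ρ with
  | nil => intro t s; simp [relC, relCost, relState]
  | cons i ρ ih =>
      intro t s
      simp only [List.foldl_cons]
      rw [ih]
      have h2 : relState r p t (i :: ρ) =
          (relC r p (max t (r i) + p i) ρ,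
           (max t (r i) + p i) + relCost r p (max t (r i) + p i) ρ) := by
        unfold relState
        simp only [List.foldl_cons]
        rw [show (0 : ℕ) + (max t (r i) + p i) = max t (r i) + p i from zero_add _]
        exact ih _ _
      simp only [relC, relCost, h2]
      ring_nf

private lemma relC_cons (r p : ℕ → ℕ) (t i : ℕ) (ρ : List ℕ) :
    relC r p t (i :: ρ) = relC r p (max t (r i) + p i) ρ := by
  have h := congrArg Prod.fst (relShift r p ρ (max t (r i) + p i) (0 + (max t (r i) + p i)))
  simpa [relC, relState, List.foldl_cons] using h

private lemma relCost_cons (r p : ℕ → ℕ) (t i : ℕ) (ρ : List ℕ) :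
    relCost r p t (i :: ρ) = (max t (r i) + p i) + relCost r p (max t (r i) + p i) ρ := by
  have := congrArg Prod.snd (relShift r p ρ (max t (r i) + p i) (0 + (max t (r i) + p i)))
  simpa [relCost, relState, List.foldl_cons] using this

private lemma rel_mono (r p : ℕ → ℕ) (ρ : List ℕ) : ∀ t t' : ℕ, t ≤ t' →
    relC r p t ρ ≤ relC r p t' ρ ∧ relCost r p t ρ ≤ relCost r p t' ρ := by
  induction ρ with
  | nil => intro t t' h; simp [relC, relCost, relState, h]
  | cons i ρ ih =>
      intro t t' h
      have hc : max t (r i) + p i ≤ max t' (r i) + p i := by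
        exact add_le_add_left (max_le_max h le_rfl) _
      obtain ⟨h1, h2⟩ := ih _ _ hc
      constructor
      · rw [relC_cons, relC_cons]; exact h1
      · rw [relCost_cons, relCost_cons]; exact add_le_add hc h2

private lemma rel_append (r p : ℕ → ℕ) (t : ℕ) (σ ρ : List ℕ) :
    relCost r p t (σ ++ ρ) = relCost r p t σ + relCost r p (relC r p t σ) ρ := by
  have : relState r p t (σ ++ ρ) =
      ρ.foldl (fun s i =>
        let c := max s.1 (r i) + p i
        (c, s.2 + c)) (relState r p t σ) := by
    unfold relState; exact List.foldl_append ..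
  rw [relCost, this, show relState r p t σ = (relC r p t σ, relCost r p t σ) from rfl,
    relShift]

theorem stmt_17 (r p : ℕ → ℕ) (t0 : ℕ) (J Ω : Finset ℕ)
    (hdisj : Disjoint J Ω) (hΩ : Ω.Nonempty)
    (σ π : List ℕ) (hσ : IsPermOf σ J) (hπ : IsPermOf π J)
    (hC : relC r p t0 σ ≤
      max (relC r p t0 π) (max (relC r p t0 π) (Ω.inf' hΩ r)))
    (hcost : relCost r p t0 σ ≤ relCost r p t0 π) :
    ∀ ρ : List ℕ, IsPermOf ρ Ω →
      relCost r p t0 (σ ++ ρ) ≤ relCost r p t0 (π ++ ρ) := by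
  intro ρ hρ
  obtain ⟨x, hx⟩ := id hΩ
  have hxρ : x ∈ ρ := (hρ.2 x).2 hx
  obtain ⟨i, ρ', rfl⟩ : ∃ i ρ', ρ = i :: ρ' := by
    cases ρ with
    | nil => simp at hxρ
    | cons a l => exact ⟨a, l, rfl⟩
  have hiΩ : i ∈ Ω := (hρ.2 i).1 (List.mem_cons_self)
  have hmin : Ω.inf' hΩ r ≤ r i := Finset.inf'_le r hiΩ
  rw [rel_append, rel_append]
  have hC' : relC r p t0 σ ≤ max (relC r p t0 π) (Ω.inf' hΩ r) := by
    simpa [max_assoc, max_self] using hC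
  have hstep : max (relC r p t0 σ) (r i) + p i ≤ max (relC r p t0 π) (r i) + p i := by
    apply add_le_add_left
    apply max_le _ (le_max_right _ _)
    calc relC r p t0 σ ≤ max (relC r p t0 π) (Ω.inf' hΩ r) := hC'
      _ ≤ max (relC r p t0 π) (r i) := max_le_max le_rfl hmin
  rw [relCost_cons, relCost_cons]
  have := rel_mono r p ρ' _ _ hstep
  exact add_le_add hcost (add_le_add hstep this.2)
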